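/- Let f : ℝ² → ℝ² be a C² vector field compactly supported in 𝔻. Then for all x ∈ ℝ²: (1) D_u(L₀f)(x) = u(x)·f(x); (2) D_u(T₀f)(x) = u⊥(x)·f(x); and (3) f(x) = (D_u L₀f)(x)·u(x) + (D_u T₀f)(x)·u⊥(x). In particular f is uniquely and explicitly determined by the pair (L₀f, T₀f). -/

import Mathlib

open MeasureTheory

noncomputable section

/-- Euclidean dot product on `ℝ × ℝ`. -/
def dot (a b : ℝ × ℝ) : ℝ := a.1 * b.1 + a.2 * b.2

/-- Rotation by `π/2`: `w⊥ = (−w₂, w₁)`. -/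
def perp (w : ℝ × ℝ) : ℝ × ℝ := (-w.2, w.1)

/-- The open unit disc in `ℝ²`. -/
def disc : Set (ℝ × ℝ) := {p : ℝ × ℝ | p.1 ^ 2 + p.2 ^ 2 < 1}

/-- Directional derivative `D_u F (x)`: derivative at `s = 0` of `s ↦ F (x + s • u x)`. -/
def DirD (u : ℝ × ℝ → ℝ × ℝ) (F : ℝ × ℝ → ℝ) (x : ℝ × ℝ) : ℝ :=
  deriv (fun s : ℝ => F (x + s • u x)) 0

/-- Longitudinal divergent beam transform. -/
def L0 (u : ℝ × ℝ → ℝ × ℝ) (f : ℝ × ℝ → ℝ × ℝ) (x : ℝ × ℝ) : ℝ :=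
  - ∫ t in Set.Ioi (0 : ℝ), dot (u x) (f (x + t • u x))

/-- Transverse divergent beam transform. -/
def T0 (u : ℝ × ℝ → ℝ × ℝ) (f : ℝ × ℝ → ℝ × ℝ) (x : ℝ × ℝ) : ℝ :=
  - ∫ t in Set.Ioi (0 : ℝ), dot (perp (u x)) (f (x + t • u x))

open Set in
/-- The derivative of `u` in the direction `u` vanishes, since `u` is constant along
forward rays. -/
lemma fderiv_along {u : ℝ × ℝ → ℝ × ℝ} (hu : ContDiff ℝ 1 u)
    (hline : ∀ (x : ℝ × ℝ) (t : ℝ), 0 ≤ t → u (x + t • u x) = u x) (z : ℝ × ℝ) :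
    (fderiv ℝ u z) (u z) = 0 := by
  have hγ : HasDerivAt (fun s : ℝ => z + s • u z) (u z) 0 := by
    simpa using ((hasDerivAt_id (0:ℝ)).smul_const (u z)).const_add z
  have h1 : HasDerivAt (fun s : ℝ => u (z + s • u z)) ((fderiv ℝ u z) (u z)) 0 := by
    have := ((hu.differentiable one_ne_zero) (z + (0:ℝ) • u z)).hasFDerivAt.comp_hasDerivAt 0 hγ
    simpa [Function.comp_def] using this
  have h2 : HasDerivWithinAt (fun s : ℝ => u (z + s • u z)) 0 (Ici 0) 0 := by
    refine (hasDerivWithinAt_const (0:ℝ) (Ici (0:ℝ)) (u z)).congr (fun t ht => hline z t ht) ?_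
    simpa using hline z 0 le_rfl
  have hud : UniqueDiffWithinAt ℝ (Ici (0:ℝ)) 0 := uniqueDiffOn_Ici 0 0 Set.self_mem_Ici
  have e1 := h1.hasDerivWithinAt.derivWithin hud
  have e2 := h2.derivWithin hud
  rw [e2] at e1
  exact e1.symm

open Set in
/-- `u` is constant along the whole line through `x` in direction `u x`, by a Grönwall
argument. -/
lemma line_full {u : ℝ × ℝ → ℝ × ℝ} (hu : ContDiff ℝ 1 u)
    (hline : ∀ (x : ℝ × ℝ) (t : ℝ), 0 ≤ t → u (x + t • u x) = u x) (x : ℝ × ℝ) (s : ℝ) :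
    u (x + s • u x) = u x := by
  rcases le_or_gt 0 s with hs | hs
  · exact hline x s hs
  set b := -s with hb
  have hb0 : 0 < b := by simp [hb]; linarith
  set γ : ℝ → ℝ × ℝ := fun r => x + (-r) • u x with hγdef
  set F : ℝ → ℝ × ℝ := fun r => u (γ r) - u x with hFdef
  have hγc : Continuous γ := by
    exact continuous_const.add (continuous_id.neg.smul continuous_const)
  have hFc : Continuous F := (hu.continuous.comp hγc).sub continuous_const
  obtain ⟨K, hK⟩ : ∃ K, ∀ r ∈ Icc (0:ℝ) b, ‖fderiv ℝ u (γ r)‖ ≤ K := by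
    have hc : ContinuousOn (fun r => fderiv ℝ u (γ r)) (Icc 0 b) :=
      ((hu.continuous_fderiv one_ne_zero).comp hγc).continuousOn
    exact isCompact_Icc.exists_bound_of_continuousOn hc
  have hFderiv : ∀ r : ℝ, HasDerivAt F ((fderiv ℝ u (γ r)) (F r)) r := by
    intro r
    have hγ' : HasDerivAt γ (-u x) r := by
      simpa [hγdef, neg_smul] using ((hasDerivAt_id r).neg.smul_const (u x)).const_add x
    have h1 : HasDerivAt (fun r => u (γ r)) ((fderiv ℝ u (γ r)) (-u x)) r :=
      ((hu.differentiable one_ne_zero) (γ r)).hasFDerivAt.comp_hasDerivAt r hγ'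
    have h2 : (fderiv ℝ u (γ r)) (-u x) = (fderiv ℝ u (γ r)) (F r) := by
      have h0 := fderiv_along hu hline (γ r)
      have h3 : F r - u (γ r) = -u x := by simp [hFdef]
      rw [← h3, map_sub, h0, sub_zero]
    exact h2 ▸ (h1.sub_const (u x))
  have key := norm_le_gronwallBound_of_norm_deriv_right_le (f := F)
    (f' := fun r => (fderiv ℝ u (γ r)) (F r)) (δ := 0) (K := K) (ε := 0) (a := 0) (b := b)
    hFc.continuousOn (fun r _ => (hFderiv r).hasDerivWithinAt)
    (by simp [hFdef, hγdef]) ?_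
  · have hFb := key b (right_mem_Icc.2 hb0.le)
    rw [gronwallBound_ε0_δ0] at hFb
    have h4 : F b = 0 := norm_le_zero_iff.mp hFb
    have h5 : u (γ b) = u x := sub_eq_zero.mp h4
    simpa [hγdef, hb] using h5
  · intro r hr
    have := (fderiv ℝ u (γ r)).le_opNorm (F r)
    have hKr := hK r (Ico_subset_Icc_self hr)
    nlinarith [norm_nonneg (F r), norm_nonneg (fderiv ℝ u (γ r))]

open Set in
/-- FTC for the tail integral of a compactly supported continuous function. -/
lemma deriv_tail {g : ℝ → ℝ} (hgc : Continuous g) (hgcs : HasCompactSupport g) :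
    HasDerivAt (fun s : ℝ => - ∫ t in Set.Ioi (0:ℝ), g (s + t)) (g 0) 0 := by
  have hgi : Integrable g := hgc.integrable_of_hasCompactSupport hgcs
  have htrans : ∀ s : ℝ, ∫ t in Set.Ioi (0:ℝ), g (s + t) = ∫ t in Set.Ioi s, g t := by
    intro s
    have hmp : MeasurePreserving (fun t : ℝ => s + t) volume volume :=
      measurePreserving_add_left volume s
    have hemb : MeasurableEmbedding (fun t : ℝ => s + t) :=
      (MeasurableEquiv.addLeft s).measurableEmbedding
    have h := hmp.setIntegral_preimage_emb hemb g (Set.Ioi s)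
    have hpre : (fun t : ℝ => s + t) ⁻¹' Set.Ioi s = Set.Ioi 0 := by
      ext t; simp
    rw [hpre] at h; exact h
  have hioi : ∀ s : ℝ, ∫ t in Set.Ioi s, g t = (∫ t, g t) - ∫ t in Set.Iic s, g t := by
    intro s
    have h := integral_add_compl (measurableSet_Iic (a := s)) hgi
    rw [compl_Iic] at h
    linarith
  have hiic : ∀ s : ℝ, ∫ t in Set.Iic s, g t
      = (∫ t in Set.Iic (0:ℝ), g t) + ∫ t in (0:ℝ)..s, g t := by
    intro s
    have h := intervalIntegral.integral_Iic_sub_Iic (hgi.integrableOn (s := Iic 0))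
      (hgi.integrableOn (s := Iic s))
    linarith
  have hmeas : StronglyMeasurableAtFilter g (nhds (0:ℝ)) volume :=
    ⟨Set.univ, Filter.univ_mem, hgc.aestronglyMeasurable.restrict⟩
  have hftc : HasDerivAt (fun s : ℝ => ∫ t in (0:ℝ)..s, g t) (g 0) 0 :=
    intervalIntegral.integral_hasDerivAt_right hgi.intervalIntegrable hmeas hgc.continuousAt
  have heq : (fun s : ℝ => - ∫ t in Set.Ioi (0:ℝ), g (s + t))
      = fun s : ℝ => (∫ t in (0:ℝ)..s, g t) + ((∫ t in Set.Iic (0:ℝ), g t) - ∫ t, g t) := by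
    funext s; rw [htrans s, hioi s, hiic s]; ring
  rw [heq]
  simpa using hftc.add_const ((∫ t in Set.Iic (0:ℝ), g t) - ∫ t, g t)

open Set in
/-- Compact support of the profile along a line. -/
lemma g_cs {u : ℝ × ℝ → ℝ × ℝ} (hunit : ∀ x, dot (u x) (u x) = 1)
    {f : ℝ × ℝ → ℝ × ℝ} (hsupp : tsupport f ⊆ disc) (x c : ℝ × ℝ) :
    HasCompactSupport (fun t : ℝ => dot c (f (x + t • u x))) := by
  set R : ℝ := 2 * (1 + ‖x‖) with hR
  apply HasCompactSupport.intro (isCompact_Icc (a := -R) (b := R))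
  intro t ht
  have hfz : f (x + t • u x) = 0 := by
    apply image_eq_zero_of_notMem_tsupport
    intro hmem
    have hd : x + t • u x ∈ disc := hsupp hmem
    have h1 : ‖x + t • u x‖ ≤ 1 := by
      simp only [disc, Set.mem_setOf_eq] at hd
      have h1 : |(x + t • u x).1| ≤ 1 := by
        nlinarith [abs_nonneg (x + t • u x).1, sq_abs (x + t • u x).1,
          sq_nonneg (x + t • u x).2, abs_nonneg (x + t • u x).2]
      have h2 : |(x + t • u x).2| ≤ 1 := by
        nlinarith [abs_nonneg (x + t • u x).2, sq_abs (x + t • u x).2,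
          sq_nonneg (x + t • u x).1]
      rw [Prod.norm_def]
      simp [Real.norm_eq_abs]
      exact ⟨h1, h2⟩
    have hux : (1:ℝ)/2 ≤ ‖u x‖ := by
      have h := hunit x
      simp only [dot] at h
      have h1 : |(u x).1| ≤ ‖u x‖ := by
        rw [Prod.norm_def]; exact le_max_of_le_left (le_of_eq (Real.norm_eq_abs _).symm)
      have h2 : |(u x).2| ≤ ‖u x‖ := by
        rw [Prod.norm_def]; exact le_max_of_le_right (le_of_eq (Real.norm_eq_abs _).symm)
      nlinarith [norm_nonneg (u x), mul_self_le_mul_self (abs_nonneg (u x).1) h1,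
        mul_self_le_mul_self (abs_nonneg (u x).2) h2, abs_mul_abs_self (u x).1,
        abs_mul_abs_self (u x).2]
    have hsm : ‖t • u x‖ ≤ 1 + ‖x‖ := by
      have h : t • u x = (x + t • u x) - x := by abel
      rw [h]
      calc ‖(x + t • u x) - x‖ ≤ ‖x + t • u x‖ + ‖x‖ := norm_sub_le _ _
        _ ≤ 1 + ‖x‖ := by linarith
    rw [norm_smul, Real.norm_eq_abs] at hsm
    have htR : |t| ≤ R := by nlinarith [abs_nonneg t]
    exact ht (abs_le.mp htR)
  simp [hfz, dot]

theorem stmt3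
    (u : ℝ × ℝ → ℝ × ℝ) (hu : ContDiff ℝ 1 u)
    (hunit : ∀ x, dot (u x) (u x) = 1)
    (hline : ∀ (x : ℝ × ℝ) (t : ℝ), 0 ≤ t → u (x + t • u x) = u x)
    (f : ℝ × ℝ → ℝ × ℝ) (hf : ContDiff ℝ 2 f)
    (hcs : HasCompactSupport f) (hsupp : tsupport f ⊆ disc) :
    (∀ x, DirD u (L0 u f) x = dot (u x) (f x)) ∧
    (∀ x, DirD u (T0 u f) x = dot (perp (u x)) (f x)) ∧
    (∀ x, f x = (DirD u (L0 u f) x) • u x + (DirD u (T0 u f) x) • perp (u x)) := by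
  have hfull : ∀ (x : ℝ × ℝ) (s : ℝ), u (x + s • u x) = u x := line_full hu hline
  have hgc : ∀ (x c : ℝ × ℝ), Continuous (fun t : ℝ => dot c (f (x + t • u x))) := by
    intro x c
    have hdotc : Continuous (fun p : ℝ × ℝ => dot c p) :=
      (continuous_const.mul continuous_fst).add (continuous_const.mul continuous_snd)
    exact hdotc.comp (hf.continuous.comp
      (continuous_const.add (continuous_id.smul continuous_const)))
  have hcomb : ∀ t : ℝ, ∀ s : ℝ, ∀ x : ℝ × ℝ, (x + s • u x) + t • u x = x + (s + t) • u x := by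
    intro t s x
    rw [add_smul, add_assoc]
  have p1 : ∀ x, DirD u (L0 u f) x = dot (u x) (f x) := by
    intro x
    have hEq : (fun s : ℝ => L0 u f (x + s • u x))
        = fun s : ℝ => - ∫ t in Set.Ioi (0:ℝ), dot (u x) (f (x + (s + t) • u x)) := by
      funext s
      simp only [L0, hfull x s, hcomb]
    have hder := deriv_tail (hgc x (u x)) (g_cs hunit hsupp x (u x))
    rw [DirD, hEq]
    have := hder.deriv
    simpa using this
  have p2 : ∀ x, DirD u (T0 u f) x = dot (perp (u x)) (f x) := by
    intro x
    have hEq : (fun s : ℝ => T0 u f (x + s • u x))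
        = fun s : ℝ => - ∫ t in Set.Ioi (0:ℝ), dot (perp (u x)) (f (x + (s + t) • u x)) := by
      funext s
      simp only [T0, hfull x s, hcomb]
    have hder := deriv_tail (hgc x (perp (u x))) (g_cs hunit hsupp x (perp (u x)))
    rw [DirD, hEq]
    have := hder.deriv
    simpa using this
  refine ⟨p1, p2, ?_⟩
  intro x
  rw [p1 x, p2 x]
  have h := hunit x
  simp only [dot] at h
  apply Prod.ext
  · simp only [dot, perp, Prod.fst_add, Prod.smul_fst, smul_eq_mul, Prod.fst_neg]
    linear_combination (-(f x).1) * h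
  · simp only [dot, perp, Prod.snd_add, Prod.smul_snd, smul_eq_mul]
    linear_combination (-(f x).2) * h
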